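/- Consider two transition systems Σ = (X, U, f, Y, h) and Σ̂ = (X̂, Û, f̂, Ŷ, ĥ) with Ŷ ⊆ Y, where f: X × U → Set X and f̂: X̂ × Û → Set X̂ are set-valued transition maps. Suppose Ṽ: X × X̂ → ℝ≥0 is an alternating simulation function from Σ̂ to Σ with functions α̃, σ̃ of class K∞ (σ̃ < id), ρ̃_ext of class K∞ ∪ {0}, and constant ε̃ ≥ 0, and suppose there exists v > 0 with ‖û‖ ≤ v for all û ∈ Û. Then the relation R = {(x, x̂) : Ṽ(x, x̂) ≤ max(ρ̃_ext(v), ε̃)} satisfies: (i) for all (x, x̂) ∈ R, ‖h(x) − ĥ(x̂)‖ ≤ α̃⁻¹(max(ρ̃_ext(v), ε̃)); (ii) for all (x, x̂) ∈ R and all û ∈ Û, there exists u ∈ U such that for all x_d ∈ f(x, u) there exists x̂_d ∈ f̂(x̂, û) with (x_d, x̂_d) ∈ R. -/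

import Mathlib

open Filter

/-- A class K∞ function: continuous, strictly increasing, vanishing at 0, and unbounded. -/
def IsKInf (f : NNReal → NNReal) : Prop :=
  Continuous f ∧ StrictMono f ∧ f 0 = 0 ∧ Filter.Tendsto f Filter.atTop Filter.atTop

theorem stmt4
    {X U Xh Uh Y : Type*} [NormedAddCommGroup Y] [NormedAddCommGroup Uh]
    (f : X → U → Set X) (fh : Xh → Uh → Set Xh)
    (h : X → Y) (hh : Xh → Y)
    (V : X → Xh → NNReal)
    (αt σt ρext : NNReal → NNReal) (αtInv : NNReal → NNReal) (εt : NNReal)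
    (hαt : IsKInf αt)
    (hαtInv1 : ∀ s, αtInv (αt s) = s) (hαtInv2 : ∀ s, αt (αtInv s) = s)
    (hσt : IsKInf σt) (hσtlt : ∀ s : NNReal, 0 < s → σt s < s)
    (hρ : IsKInf ρext ∨ ρext = 0)
    -- Ṽ is an alternating simulation function from Σ̂ to Σ:
    (hV1 : ∀ (x : X) (xh : Xh), αt ‖h x - hh xh‖₊ ≤ V x xh)
    (hV2 : ∀ (x : X) (xh : Xh) (uh : Uh), ∃ u : U,
      ∀ xd ∈ f x u, ∃ xhd ∈ fh xh uh,
        V xd xhd ≤ max (σt (V x xh)) (max (ρext ‖uh‖₊) εt))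
    -- inputs of Σ̂ are bounded by v:
    (v : NNReal) (hv : 0 < v) (hbound : ∀ uh : Uh, ‖uh‖₊ ≤ v) :
    -- (i) the relation R = {(x,x̂) : Ṽ(x,x̂) ≤ max(ρ̃ext(v),ε̃)} has small output mismatch:
    (∀ (x : X) (xh : Xh), V x xh ≤ max (ρext v) εt →
        ‖h x - hh xh‖₊ ≤ αtInv (max (ρext v) εt)) ∧
    -- (ii) R is closed under the alternating transition condition:
    (∀ (x : X) (xh : Xh), V x xh ≤ max (ρext v) εt →
      ∀ uh : Uh, ∃ u : U, ∀ xd ∈ f x u, ∃ xhd ∈ fh xh uh,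
        V xd xhd ≤ max (ρext v) εt) := by

  have hαmono : Monotone αt := hαt.2.1.monotone
  have hInvMono : Monotone αtInv := by
    intro a b hab
    have := hαt.2.1.le_iff_le (a := αtInv a) (b := αtInv b)
    rw [hαtInv2, hαtInv2] at this
    exact this.mp hab
  have hσle : ∀ s, σt s ≤ s := by
    intro s
    rcases eq_or_lt_of_le (zero_le : (0 : NNReal) ≤ s) with hs | hs
    · rw [← hs, hσt.2.2.1]
    · exact (hσtlt s hs).le
  have hρmono : Monotone ρext := by
    rcases hρ with h1 | h1
    · exact h1.2.1.monotone
    · rw [h1]; intro a b _; rfl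
  constructor
  · intro x xh hR
    have h1 : αt ‖h x - hh xh‖₊ ≤ max (ρext v) εt := le_trans (hV1 x xh) hR
    have := hInvMono h1
    rwa [hαtInv1] at this
  · intro x xh hR uh
    obtain ⟨u, hu⟩ := hV2 x xh uh
    refine ⟨u, fun xd hxd => ?_⟩
    obtain ⟨xhd, hxhd, hle⟩ := hu xd hxd
    refine ⟨xhd, hxhd, le_trans hle ?_⟩
    apply max_le
    · exact le_trans (hσle _) hR
    · apply max_le
      · exact le_max_of_le_left (hρmono (hbound uh))
      · exact le_max_right _ _
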